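/- The optimal value of the following semidefinite program equals 3/4: maximize (1/2)⟨σ₀, P₀⟩ + (1/2)⟨σ₁, P₁⟩ over density matrices σ₀, σ₁ on Y ⊗ A₀ ⊗ B₀ ⊗ A₁ ⊗ B₁ = ℂ² ⊗ ℂ³ ⊗ ℂ³ ⊗ ℂ³ ⊗ ℂ³, subject to Tr_{Y,A₀,A₁}(σ₀) = Tr_{Y,A₀,A₁}(σ₁) (equal partial traces onto B₀ ⊗ B₁), where P₀ = Σ_{y∈{0,1}} |y⟩⟨y|_Y ⊗ |φ_y⟩⟨φ_y|_{A₀⊗B₀} ⊗ 1_{A₁} ⊗ |2⟩⟨2|_{B₁} and P₁ = Σ_{y∈{0,1}} |y⟩⟨y|_Y ⊗ 1_{A₀} ⊗ |2⟩⟨2|_{B₀} ⊗ |φ_y⟩⟨φ_y|_{A₁⊗B₁}. (This is the optimal probability with which a cheating Alice forces outcome 1 in the EPR-based weak coin flipping protocol.) -/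

import Mathlib

/-! STATEMENT 2: Alice's optimal cheating probability (forcing outcome 1) in the EPR-based weak coin flipping protocol equals 3/4. -/

open Matrix
open scoped Matrix BigOperators ComplexOrder

noncomputable section

/-- Square matrices over ℂ indexed by `α`. -/
abbrev Mat (α : Type) : Type := Matrix α α ℂ

/-- A density matrix: positive semidefinite with unit trace. -/
def IsDensity {α : Type} [Fintype α] [DecidableEq α] (ρ : Mat α) : Prop :=
  ρ.PosSemidef ∧ ρ.trace = 1

/-- Hilbert–Schmidt inner product ⟨P, Q⟩ = Tr(P† Q). -/
def hs {α : Type} [Fintype α] (P Q : Mat α) : ℂ := (Pᴴ * Q).trace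

/-- Outer product |v⟩⟨v|. -/
def outer {α : Type} (v : α → ℂ) : Mat α := fun i j => v i * star (v j)

/-- Standard basis vector |i⟩. -/
def ket {α : Type} [DecidableEq α] (i : α) : α → ℂ := fun j => if j = i then 1 else 0

/-- The embedding of Fin 2 into Fin 3. -/
def f23 (y : Fin 2) : Fin 3 := ⟨y.val, by omega⟩

/-- |φ_y⟩ = (|yy⟩ + |22⟩)/√2 ∈ ℂ³ ⊗ ℂ³. -/
def phi (y : Fin 2) : Fin 3 × Fin 3 → ℂ :=
  fun p => (ket (f23 y, f23 y) p + ket ((2 : Fin 3), (2 : Fin 3)) p) / (Real.sqrt 2 : ℂ)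

/-- Partial trace over the first tensor factor. -/
def ptrA {α β : Type} [Fintype α] (ρ : Mat (α × β)) : Mat β :=
  fun b b' => ∑ a, ρ (a, b) (a, b')

/-- Index for Y ⊗ A₀ ⊗ B₀ ⊗ A₁ ⊗ B₁. -/
abbrev I5 : Type := Fin 2 × Fin 3 × Fin 3 × Fin 3 × Fin 3

/-- P₀ = Σ_y |y⟩⟨y|_Y ⊗ |φ_y⟩⟨φ_y|_{A₀⊗B₀} ⊗ 1_{A₁} ⊗ |2⟩⟨2|_{B₁}. -/
def P0w : Mat I5 := fun p q =>
  match p, q with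
  | (y, a0, b0, a1, b1), (y', a0', b0', a1', b1') =>
    ∑ u : Fin 2, ket u y * star (ket u y') *
      (phi u (a0, b0) * star (phi u (a0', b0'))) *
      (if a1 = a1' then 1 else 0) *
      (ket (2 : Fin 3) b1 * star (ket (2 : Fin 3) b1'))

/-- P₁ = Σ_y |y⟩⟨y|_Y ⊗ 1_{A₀} ⊗ |2⟩⟨2|_{B₀} ⊗ |φ_y⟩⟨φ_y|_{A₁⊗B₁}. -/
def P1w : Mat I5 := fun p q =>
  match p, q with
  | (y, a0, b0, a1, b1), (y', a0', b0', a1', b1') =>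
    ∑ u : Fin 2, ket u y * star (ket u y') *
      (if a0 = a0' then 1 else 0) *
      (ket (2 : Fin 3) b0 * star (ket (2 : Fin 3) b0')) *
      (phi u (a1, b1) * star (phi u (a1', b1')))

/-- Partial trace over Y, A₀ and A₁, onto B₀ ⊗ B₁. -/
def trYA (ρ : Mat I5) : Mat (Fin 3 × Fin 3) :=
  fun p q => ∑ y, ∑ a0, ∑ a1,
    ρ (y, a0, p.1, a1, p.2) (y, a0, q.1, a1, q.2)

-- basic helpers
lemma star_ket {α : Type} [DecidableEq α] (i j : α) : star (ket i j) = ket i j := by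
  simp [ket, apply_ite]

lemma sum_ket_mul {α : Type} [Fintype α] [DecidableEq α] (i : α) (f : α → ℂ) :
    ∑ p, ket i p * f p = f i := by
  simp [ket, ite_mul, Finset.sum_ite_eq']

lemma sum_mul_ket {α : Type} [Fintype α] [DecidableEq α] (i : α) (f : α → ℂ) :
    ∑ p, f p * ket i p = f i := by
  simp [ket, mul_ite, Finset.sum_ite_eq']

lemma sum_ket_ket (a b : Fin 3) :
    ∑ c : Fin 3, ket c a * ket c b = if a = b then (1:ℂ) else 0 := by
  fin_cases a <;> fin_cases b <;> simp [ket, Fin.sum_univ_three]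

lemma sqrt2C : (Real.sqrt 2 : ℂ) * (Real.sqrt 2 : ℂ) = 2 := by
  norm_cast
  rw [Real.mul_self_sqrt] <;> norm_num

def g0 (u : Fin 2) (c : Fin 3) : I5 → ℂ := fun p =>
  (ket ((u, f23 u, f23 u, c, (2:Fin 3)) : I5) p + ket ((u, 2, 2, c, (2:Fin 3)) : I5) p)
    / (Real.sqrt 2 : ℂ)

def g1 (u : Fin 2) (c : Fin 3) : I5 → ℂ := fun p =>
  (ket ((u, c, (2:Fin 3), f23 u, f23 u) : I5) p + ket ((u, c, (2:Fin 3), 2, 2) : I5) p)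
    / (Real.sqrt 2 : ℂ)

lemma g0_apply (u : Fin 2) (c : Fin 3) (y : Fin 2) (a0 b0 a1 b1 : Fin 3) :
    g0 u c (y, a0, b0, a1, b1)
      = ket u y * phi u (a0, b0) * ket c a1 * ket (2:Fin 3) b1 := by
  simp only [g0, phi, ket, Prod.mk.injEq]
  split_ifs <;> simp_all <;> norm_num

lemma g1_apply (u : Fin 2) (c : Fin 3) (y : Fin 2) (a0 b0 a1 b1 : Fin 3) :
    g1 u c (y, a0, b0, a1, b1)
      = ket u y * ket c a0 * ket (2:Fin 3) b0 * phi u (a1, b1) := by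
  simp only [g1, phi, ket, Prod.mk.injEq]
  split_ifs <;> simp_all <;> norm_num

lemma star_g0 (u : Fin 2) (c : Fin 3) (p : I5) : star (g0 u c p) = g0 u c p := by
  simp only [g0, ket, star_div₀, star_add]
  split_ifs <;> simp

lemma star_g1 (u : Fin 2) (c : Fin 3) (p : I5) : star (g1 u c p) = g1 u c p := by
  simp only [g1, ket, star_div₀, star_add]
  split_ifs <;> simp

lemma star_phi (u : Fin 2) (p : Fin 3 × Fin 3) : star (phi u p) = phi u p := by
  simp only [phi, ket, star_div₀, star_add]
  split_ifs <;> simp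

lemma P0w_eq (p q : I5) :
    P0w p q = ∑ u : Fin 2, ∑ c : Fin 3, g0 u c p * star (g0 u c q) := by
  obtain ⟨y, a0, b0, a1, b1⟩ := p
  obtain ⟨y', a0', b0', a1', b1'⟩ := q
  show (∑ u : Fin 2, ket u y * star (ket u y') *
      (phi u (a0, b0) * star (phi u (a0', b0'))) *
      (if a1 = a1' then 1 else 0) *
      (ket (2 : Fin 3) b1 * star (ket (2 : Fin 3) b1'))) = _
  refine Finset.sum_congr rfl fun u _ => ?_
  rw [← sum_ket_ket a1 a1']
  rw [Finset.mul_sum, Finset.sum_mul]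
  refine Finset.sum_congr rfl fun c _ => ?_
  simp only [g0_apply, star_mul', star_ket, star_phi]
  ring

lemma P1w_eq (p q : I5) :
    P1w p q = ∑ u : Fin 2, ∑ c : Fin 3, g1 u c p * star (g1 u c q) := by
  obtain ⟨y, a0, b0, a1, b1⟩ := p
  obtain ⟨y', a0', b0', a1', b1'⟩ := q
  show (∑ u : Fin 2, ket u y * star (ket u y') *
      (if a0 = a0' then 1 else 0) *
      (ket (2 : Fin 3) b0 * star (ket (2 : Fin 3) b0')) *
      (phi u (a1, b1) * star (phi u (a1', b1')))) = _
  refine Finset.sum_congr rfl fun u _ => ?_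
  rw [← sum_ket_ket a0 a0']
  rw [Finset.mul_sum, Finset.sum_mul, Finset.sum_mul]
  refine Finset.sum_congr rfl fun c _ => ?_
  simp only [g1_apply, star_mul', star_ket, star_phi]
  ring

lemma quadform_of_decomp {α κ : Type} [Fintype α] [Fintype κ] (P : Mat α) (g : κ → α → ℂ)
    (h : ∀ p q, P p q = ∑ k, g k p * star (g k q)) (x : α → ℂ) :
    star x ⬝ᵥ P.mulVec x
      = ∑ k, star (∑ p, star (g k p) * x p) * (∑ p, star (g k p) * x p) := by
  have hrow : ∀ p, (∑ q, P p q * x q) = ∑ k, g k p * (∑ q, star (g k q) * x q) := by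
    intro p
    simp only [h, Finset.sum_mul]
    rw [Finset.sum_comm]
    simp [Finset.mul_sum, mul_assoc]
  simp only [dotProduct, mulVec, Pi.star_apply, hrow, Finset.mul_sum]
  rw [Finset.sum_comm]
  refine Finset.sum_congr rfl fun k _ => ?_
  rw [Finset.sum_comm]
  refine Finset.sum_congr rfl fun q _ => ?_
  rw [star_sum, Finset.sum_mul]
  refine Finset.sum_congr rfl fun p _ => ?_
  rw [star_mul', star_star]
  ring

lemma sqrt2R : Real.sqrt 2 * Real.sqrt 2 = 2 := Real.mul_self_sqrt (by norm_num)

lemma quadform_P0 (x : I5 → ℂ) :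
    star x ⬝ᵥ P0w.mulVec x = ∑ k : Fin 2 × Fin 3,
      ((Complex.normSq (x (k.1, f23 k.1, f23 k.1, k.2, 2) + x (k.1, 2, 2, k.2, 2)) / 2 : ℝ) : ℂ) := by
  rw [quadform_of_decomp P0w (fun k : Fin 2 × Fin 3 => g0 k.1 k.2)
      (by intro p q; rw [P0w_eq]; rw [Fintype.sum_prod_type])]
  refine Finset.sum_congr rfl fun k _ => ?_
  have ht : (∑ p, star (g0 k.1 k.2 p) * x p)
      = (x (k.1, f23 k.1, f23 k.1, k.2, 2) + x (k.1, 2, 2, k.2, 2)) / (Real.sqrt 2 : ℂ) := by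
    simp only [star_g0]
    simp only [g0, div_mul_eq_mul_div, ← Finset.sum_div]
    congr 1
    simp only [add_mul, Finset.sum_add_distrib, sum_ket_mul]
  rw [ht]
  rw [Complex.star_def, mul_comm, Complex.mul_conj]
  rw [Complex.normSq_div]
  norm_num [Complex.normSq_ofReal, sqrt2R]

lemma quadform_P1 (x : I5 → ℂ) :
    star x ⬝ᵥ P1w.mulVec x = ∑ k : Fin 2 × Fin 3,
      ((Complex.normSq (x (k.1, k.2, 2, f23 k.1, f23 k.1) + x (k.1, k.2, 2, 2, 2)) / 2 : ℝ) : ℂ) := by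
  rw [quadform_of_decomp P1w (fun k : Fin 2 × Fin 3 => g1 k.1 k.2)
      (by intro p q; rw [P1w_eq]; rw [Fintype.sum_prod_type])]
  refine Finset.sum_congr rfl fun k _ => ?_
  have ht : (∑ p, star (g1 k.1 k.2 p) * x p)
      = (x (k.1, k.2, 2, f23 k.1, f23 k.1) + x (k.1, k.2, 2, 2, 2)) / (Real.sqrt 2 : ℂ) := by
    simp only [star_g1]
    simp only [g1, div_mul_eq_mul_div, ← Finset.sum_div]
    congr 1
    simp only [add_mul, Finset.sum_add_distrib, sum_ket_mul]
  rw [ht]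
  rw [Complex.star_def, mul_comm, Complex.mul_conj]
  rw [Complex.normSq_div]
  norm_num [Complex.normSq_ofReal, sqrt2R]

/-- dual certificate diagonal values, on (b0, b1) -/
def zB : Fin 3 × Fin 3 → ℝ := fun b =>
  if b.1 ≠ 2 ∧ b.2 = 2 then 3/4 else if b.1 = 2 ∧ b.2 ≠ 2 then -3/4 else 0

def dz0 : I5 → ℝ := fun p => 3/4 + zB (p.2.2.1, p.2.2.2.2)
def dz1 : I5 → ℝ := fun p => 3/4 - zB (p.2.2.1, p.2.2.2.2)

def LZ : Mat I5 := Matrix.diagonal fun p => (zB (p.2.2.1, p.2.2.2.2) : ℂ)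

def M0 : Mat I5 := ((3/4 : ℂ) • 1 + LZ) - P0w
def M1 : Mat I5 := ((3/4 : ℂ) • 1 - LZ) - P1w

lemma quadform_diag {α : Type} [Fintype α] [DecidableEq α] (d : α → ℝ) (x : α → ℂ) :
    star x ⬝ᵥ (Matrix.diagonal fun p => (d p : ℂ)).mulVec x
      = ((∑ p, d p * Complex.normSq (x p) : ℝ) : ℂ) := by
  push_cast
  simp only [mulVec_diagonal, dotProduct, Pi.star_apply]
  refine Finset.sum_congr rfl fun p _ => ?_
  rw [show ((Complex.normSq (x p) : ℂ)) = star (x p) * x p by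
    rw [Complex.star_def, mul_comm, Complex.mul_conj]]
  ring

lemma diag_real_herm {α : Type} [Fintype α] [DecidableEq α] (d : α → ℝ) :
    (Matrix.diagonal fun p => (d p : ℂ)).IsHermitian := by
  have h : (star fun p => (d p : ℂ)) = fun p => (d p : ℂ) := by
    funext p
    simp [Pi.star_apply, Complex.star_def, Complex.conj_ofReal]
  rw [Matrix.IsHermitian, Matrix.diagonal_conjTranspose, h]

lemma diag0 : ((3/4 : ℂ) • 1 + LZ) = Matrix.diagonal fun p => (dz0 p : ℂ) := by
  funext p q
  by_cases h : p = q <;>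
    simp [LZ, dz0, Matrix.diagonal, Matrix.one_apply, h] <;> push_cast <;> ring

lemma diag1 : ((3/4 : ℂ) • 1 - LZ) = Matrix.diagonal fun p => (dz1 p : ℂ) := by
  funext p q
  by_cases h : p = q <;>
    simp [LZ, dz1, Matrix.diagonal, Matrix.one_apply, h] <;> push_cast <;> ring

lemma P0w_herm : P0w.IsHermitian := by
  refine Matrix.ext fun p q => ?_
  rw [Matrix.conjTranspose_apply, P0w_eq q p, P0w_eq p q, star_sum]
  refine Finset.sum_congr rfl fun u _ => ?_
  rw [star_sum]
  refine Finset.sum_congr rfl fun c _ => ?_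
  rw [star_mul', star_star]
  exact mul_comm _ _

lemma P1w_herm : P1w.IsHermitian := by
  refine Matrix.ext fun p q => ?_
  rw [Matrix.conjTranspose_apply, P1w_eq q p, P1w_eq p q, star_sum]
  refine Finset.sum_congr rfl fun u _ => ?_
  rw [star_sum]
  refine Finset.sum_congr rfl fun c _ => ?_
  rw [star_mul', star_star]
  exact mul_comm _ _

lemma nsq_bound (a b : ℂ) :
    Complex.normSq (a + b) / 2 ≤ (3/2) * Complex.normSq a + (3/4) * Complex.normSq b := by
  have h1 := norm_add_le a b
  have h2 := norm_nonneg a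
  have h3 := norm_nonneg b
  have h4 := Complex.sq_norm a
  have h5 := Complex.sq_norm b
  have h6 := Complex.sq_norm (a + b)
  have h7 : ‖a + b‖ ^ 2 ≤ (‖a‖ + ‖b‖) ^ 2 := by
    have := norm_nonneg (a + b)
    nlinarith
  nlinarith [sq_nonneg (2 * ‖a‖ - ‖b‖)]

lemma bound_gen (w : I5 → ℝ) (n : I5 → ℝ) (hn : ∀ p, 0 ≤ n p) (hw : ∀ p, 0 ≤ w p)
    (A B : Fin 2 × Fin 3 → I5) (hA : Function.Injective A) (hB : Function.Injective B)
    (hAB : ∀ k k', A k ≠ B k') (hwA : ∀ k, w (A k) = 3/2) (hwB : ∀ k, w (B k) = 3/4) :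
    ∑ k : Fin 2 × Fin 3, ((3/2) * n (A k) + (3/4) * n (B k)) ≤ ∑ p : I5, w p * n p := by
  rw [Finset.sum_add_distrib]
  have h1 : ∑ k : Fin 2 × Fin 3, (3/2 : ℝ) * n (A k)
      = ∑ p ∈ Finset.univ.image A, w p * n p := by
    rw [Finset.sum_image (fun a _ b _ h => hA h)]
    exact Finset.sum_congr rfl fun k _ => by rw [hwA]
  have h2 : ∑ k : Fin 2 × Fin 3, (3/4 : ℝ) * n (B k)
      = ∑ p ∈ Finset.univ.image B, w p * n p := by
    rw [Finset.sum_image (fun a _ b _ h => hB h)]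
    exact Finset.sum_congr rfl fun k _ => by rw [hwB]
  rw [h1, h2, ← Finset.sum_union (by
    rw [Finset.disjoint_left]
    rintro p hp hp'
    obtain ⟨k, _, rfl⟩ := Finset.mem_image.mp hp
    obtain ⟨k', _, hk'⟩ := Finset.mem_image.mp hp'
    exact hAB k k' hk'.symm)]
  exact Finset.sum_le_sum_of_subset_of_nonneg (Finset.subset_univ _)
    (fun p _ _ => mul_nonneg (hw p) (hn p))

def al0 (k : Fin 2 × Fin 3) : I5 := (k.1, f23 k.1, f23 k.1, k.2, 2)
def be0 (k : Fin 2 × Fin 3) : I5 := (k.1, 2, 2, k.2, 2)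
def al1 (k : Fin 2 × Fin 3) : I5 := (k.1, k.2, 2, f23 k.1, f23 k.1)
def be1 (k : Fin 2 × Fin 3) : I5 := (k.1, k.2, 2, 2, 2)

lemma dz0_nonneg (p : I5) : 0 ≤ dz0 p := by
  unfold dz0 zB; split_ifs <;> norm_num

lemma dz1_nonneg (p : I5) : 0 ≤ dz1 p := by
  unfold dz1 zB; split_ifs <;> norm_num

lemma dz0_al0 (k : Fin 2 × Fin 3) : dz0 (al0 k) = 3/2 := by
  obtain ⟨u, c⟩ := k
  fin_cases u <;> norm_num [dz0, zB, al0, f23] <;> simp <;> norm_num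

lemma dz0_be0 (k : Fin 2 × Fin 3) : dz0 (be0 k) = 3/4 := by
  norm_num [dz0, zB, be0]

lemma dz1_al1 (k : Fin 2 × Fin 3) : dz1 (al1 k) = 3/2 := by
  obtain ⟨u, c⟩ := k
  fin_cases u <;> norm_num [dz1, zB, al1, f23] <;> simp <;> norm_num

lemma dz1_be1 (k : Fin 2 × Fin 3) : dz1 (be1 k) = 3/4 := by
  norm_num [dz1, zB, be1]

lemma al0_inj : Function.Injective al0 := by decide
lemma be0_inj : Function.Injective be0 := by decide
lemma al1_inj : Function.Injective al1 := by decide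
lemma be1_inj : Function.Injective be1 := by decide
lemma al0_ne_be0 : ∀ k k', al0 k ≠ be0 k' := by decide
lemma al1_ne_be1 : ∀ k k', al1 k ≠ be1 k' := by decide

theorem M0_psd : M0.PosSemidef := by
  refine Matrix.PosSemidef.of_dotProduct_mulVec_nonneg ?_ ?_
  · rw [M0, diag0]
    exact (diag_real_herm dz0).sub P0w_herm
  · intro x
    have e : star x ⬝ᵥ M0.mulVec x
        = ((∑ p, dz0 p * Complex.normSq (x p)
            - ∑ k : Fin 2 × Fin 3, Complex.normSq (x (al0 k) + x (be0 k)) / 2 : ℝ) : ℂ) := by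
      rw [M0, diag0, Matrix.sub_mulVec, dotProduct_sub, quadform_diag, quadform_P0]
      push_cast [al0, be0]
      ring
    rw [e, Complex.zero_le_real, sub_nonneg]
    calc ∑ k : Fin 2 × Fin 3, Complex.normSq (x (al0 k) + x (be0 k)) / 2
        ≤ ∑ k : Fin 2 × Fin 3,
            ((3/2) * Complex.normSq (x (al0 k)) + (3/4) * Complex.normSq (x (be0 k))) :=
          Finset.sum_le_sum fun k _ => nsq_bound _ _
      _ ≤ ∑ p, dz0 p * Complex.normSq (x p) :=
          bound_gen dz0 (fun p => Complex.normSq (x p)) (fun p => Complex.normSq_nonneg _)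
            dz0_nonneg al0 be0 al0_inj be0_inj al0_ne_be0 dz0_al0 dz0_be0

theorem M1_psd : M1.PosSemidef := by
  refine Matrix.PosSemidef.of_dotProduct_mulVec_nonneg ?_ ?_
  · rw [M1, diag1]
    exact (diag_real_herm dz1).sub P1w_herm
  · intro x
    have e : star x ⬝ᵥ M1.mulVec x
        = ((∑ p, dz1 p * Complex.normSq (x p)
            - ∑ k : Fin 2 × Fin 3, Complex.normSq (x (al1 k) + x (be1 k)) / 2 : ℝ) : ℂ) := by
      rw [M1, diag1, Matrix.sub_mulVec, dotProduct_sub, quadform_diag, quadform_P1]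
      push_cast [al1, be1]
      ring
    rw [e, Complex.zero_le_real, sub_nonneg]
    calc ∑ k : Fin 2 × Fin 3, Complex.normSq (x (al1 k) + x (be1 k)) / 2
        ≤ ∑ k : Fin 2 × Fin 3,
            ((3/2) * Complex.normSq (x (al1 k)) + (3/4) * Complex.normSq (x (be1 k))) :=
          Finset.sum_le_sum fun k _ => nsq_bound _ _
      _ ≤ ∑ p, dz1 p * Complex.normSq (x p) :=
          bound_gen dz1 (fun p => Complex.normSq (x p)) (fun p => Complex.normSq_nonneg _)
            dz1_nonneg al1 be1 al1_inj be1_inj al1_ne_be1 dz1_al1 dz1_be1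

lemma psd_trace_nonneg {n : Type} [Fintype n] [DecidableEq n] {A : Mat n}
    (hA : A.PosSemidef) : 0 ≤ A.trace := by
  rw [Matrix.trace]
  apply Finset.sum_nonneg
  intro i _
  have h := hA.dotProduct_mulVec_nonneg (Pi.single i 1)
  have e : star (Pi.single i 1) ⬝ᵥ A.mulVec (Pi.single i 1) = A.diag i := by
    simp [dotProduct, mulVec, Pi.single_apply, Pi.star_apply, apply_ite,
      Finset.sum_ite_eq, Finset.sum_ite_eq', mul_ite, ite_mul, Matrix.diag]
  rwa [e] at h

lemma trace_mul_psd_nonneg {n : Type} [Fintype n] [DecidableEq n] {A B : Mat n}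
    (hA : A.PosSemidef) (hB : B.PosSemidef) : 0 ≤ (A * B).trace := by
  obtain ⟨C, rfl⟩ : ∃ C : Mat n, B = star C * C := by
    open scoped MatrixOrder in exact CStarAlgebra.nonneg_iff_eq_star_mul_self.mp hB.nonneg
  rw [← mul_assoc, Matrix.trace_mul_comm, ← mul_assoc]
  exact psd_trace_nonneg ((hA.mul_mul_conjTranspose_same C))

lemma lz_trace (σ : Mat I5) :
    (σ * LZ).trace = ∑ b : Fin 3 × Fin 3, (zB b : ℂ) * trYA σ b b := by
  have h1 : (σ * LZ).trace = ∑ p : I5, σ p p * (zB (p.2.2.1, p.2.2.2.2) : ℂ) := by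
    simp [LZ, Matrix.trace, Matrix.diag, Matrix.mul_diagonal]
  rw [h1]
  let e : ((Fin 3 × Fin 3) × (Fin 2 × Fin 3 × Fin 3)) ≃ I5 :=
    ⟨fun q => (q.2.1, q.2.2.1, q.1.1, q.2.2.2, q.1.2),
     fun p => ((p.2.2.1, p.2.2.2.2), (p.1, p.2.1, p.2.2.2.1)),
     fun q => rfl, fun p => rfl⟩
  rw [← e.sum_comp (fun p => σ p p * (zB (p.2.2.1, p.2.2.2.2) : ℂ))]
  rw [Fintype.sum_prod_type]
  refine Finset.sum_congr rfl fun b _ => ?_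
  rw [trYA, Finset.mul_sum]
  rw [Fintype.sum_prod_type]
  refine Finset.sum_congr rfl fun y _ => ?_
  rw [Finset.mul_sum, Fintype.sum_prod_type]
  refine Finset.sum_congr rfl fun a0 _ => ?_
  rw [Finset.mul_sum]
  exact Finset.sum_congr rfl fun a1 _ => mul_comm _ _

lemma upper_bound (σ0 σ1 : Mat I5) (h0 : IsDensity σ0) (h1 : IsDensity σ1)
    (hm : trYA σ0 = trYA σ1) :
    ((1/2 : ℂ) * hs σ0 P0w + (1/2 : ℂ) * hs σ1 P1w).re ≤ 3/4 := by
  have hP0 : P0w = ((3/4 : ℂ) • 1 + LZ) - M0 := by rw [M0, sub_sub_cancel]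
  have hP1 : P1w = ((3/4 : ℂ) • 1 - LZ) - M1 := by rw [M1, sub_sub_cancel]
  have key0 : hs σ0 P0w = 3/4 + (σ0 * LZ).trace - (σ0 * M0).trace := by
    rw [hs, h0.1.1, hP0, Matrix.mul_sub, Matrix.trace_sub, Matrix.mul_add,
      Matrix.trace_add, Matrix.mul_smul, mul_one, Matrix.trace_smul, h0.2]
    norm_num
  have key1 : hs σ1 P1w = 3/4 - (σ1 * LZ).trace - (σ1 * M1).trace := by
    rw [hs, h1.1.1, hP1, Matrix.mul_sub, Matrix.trace_sub, Matrix.mul_sub,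
      Matrix.trace_sub, Matrix.mul_smul, mul_one, Matrix.trace_smul, h1.2]
    norm_num
  have hT : (σ0 * LZ).trace = (σ1 * LZ).trace := by rw [lz_trace, lz_trace, hm]
  have t0 := trace_mul_psd_nonneg h0.1 M0_psd
  have t1 := trace_mul_psd_nonneg h1.1 M1_psd
  have e : (1/2 : ℂ) * hs σ0 P0w + (1/2 : ℂ) * hs σ1 P1w
      = 3/4 - (1/2) * ((σ0 * M0).trace + (σ1 * M1).trace) := by
    rw [key0, key1, hT]; ring
  rw [e]
  have hre0 : 0 ≤ ((σ0 * M0).trace).re := (Complex.le_def.mp t0).1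
  have hre1 : 0 ≤ ((σ1 * M1).trace).re := (Complex.le_def.mp t1).1
  simp [Complex.sub_re, Complex.mul_re, Complex.add_re]
  norm_num
  linarith

def i1 : I5 := (0, 0, 0, 0, 2)
def i2 : I5 := (0, 2, 2, 0, 2)
def i3 : I5 := (0, 0, 2, 0, 0)
def j2 : I5 := (0, 0, 2, 2, 2)

def v0 : I5 → ℂ := fun p => ket i1 p + 2 * ket i2 p
def v1 : I5 → ℂ := fun p => ket i3 p + 2 * ket j2 p

def sig0 : Mat I5 := (1/6 : ℂ) • (outer v0 + outer (ket i3))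
def sig1 : Mat I5 := (1/6 : ℂ) • (outer v1 + outer (ket i1))

lemma outer_herm {α : Type} (v : α → ℂ) : (outer v).IsHermitian := by
  refine Matrix.ext fun p q => ?_
  simp [outer, Matrix.conjTranspose_apply, mul_comm]

lemma outer_psd {α : Type} [Fintype α] [DecidableEq α] (v : α → ℂ) :
    (outer v).PosSemidef := by
  refine Matrix.PosSemidef.of_dotProduct_mulVec_nonneg (outer_herm v) fun x => ?_
  have h := quadform_of_decomp (α := α) (κ := Unit) (outer v) (fun _ => v)
    (fun p q => by simp [outer]) x
  simp only [Finset.univ_unique, Finset.sum_singleton] at h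
  rw [h]
  exact star_mul_self_nonneg _

lemma sig_psd {A B : Mat I5} (hA : A.PosSemidef) (hB : B.PosSemidef) :
    ((1/6 : ℂ) • (A + B)).PosSemidef := by
  have hAB := hA.add hB
  refine Matrix.PosSemidef.of_dotProduct_mulVec_nonneg ?_ fun x => ?_
  · rw [Matrix.IsHermitian, Matrix.conjTranspose_smul, hAB.1]
    norm_num
  · have h := hAB.dotProduct_mulVec_nonneg x
    rw [Matrix.smul_mulVec, dotProduct_smul]
    have : (0:ℂ) ≤ (1/6 : ℂ) := by
      rw [Complex.le_def]
      norm_num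
    calc (0:ℂ) = (1/6 : ℂ) * 0 := by ring
    _ ≤ (1/6 : ℂ) * (star x ⬝ᵥ (A + B) *ᵥ x) := by
        apply mul_le_mul_of_nonneg_left h this
    _ = (1/6 : ℂ) • (star x ⬝ᵥ (A + B) *ᵥ x) := by rw [smul_eq_mul]

lemma trace_outer {α : Type} [Fintype α] (v : α → ℂ) :
    (outer v).trace = ∑ p, v p * star (v p) := by
  simp [Matrix.trace, Matrix.diag, outer]

lemma star_v0 (p : I5) : star (v0 p) = v0 p := by
  simp [v0, star_add, star_mul', star_ket]
lemma star_v1 (p : I5) : star (v1 p) = v1 p := by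
  simp [v1, star_add, star_mul', star_ket]

lemma trace_outer2 (i j : I5) (hij : i ≠ j) :
    (outer (fun p => ket i p + 2 * ket j p)).trace = 5 := by
  rw [trace_outer]
  have hst : ∀ p, star (ket i p + 2 * ket j p) = ket i p + 2 * ket j p := by
    intro p; simp [star_add, star_mul', star_ket]
  simp only [hst, add_mul, mul_add, Finset.sum_add_distrib, sum_ket_mul, sum_mul_ket]
  simp [ket, hij, Ne.symm hij]
  norm_num

lemma sig0_trace : sig0.trace = 1 := by
  rw [sig0]
  rw [show v0 = fun p => ket i1 p + 2 * ket i2 p from rfl]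
  rw [Matrix.trace_smul, Matrix.trace_add, trace_outer2 i1 i2 (by decide), trace_outer]
  have : ∀ p : I5, ket i3 p * star (ket i3 p) = ket i3 p := by
    intro p; simp [ket]
  rw [Finset.sum_congr rfl fun p _ => this p]
  rw [show (∑ p, ket i3 p) = 1 by simpa using sum_ket_mul i3 (fun _ => (1:ℂ))]
  norm_num

lemma sig1_trace : sig1.trace = 1 := by
  rw [sig1]
  rw [show v1 = fun p => ket i3 p + 2 * ket j2 p from rfl]
  rw [Matrix.trace_smul, Matrix.trace_add, trace_outer2 i3 j2 (by decide), trace_outer]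
  have : ∀ p : I5, ket i1 p * star (ket i1 p) = ket i1 p := by
    intro p; simp [ket]
  rw [Finset.sum_congr rfl fun p _ => this p]
  rw [show (∑ p, ket i1 p) = 1 by simpa using sum_ket_mul i1 (fun _ => (1:ℂ))]
  norm_num

lemma trace_outer2_mul (i j : I5) (P : Mat I5) :
    (outer (fun p => ket i p + 2 * ket j p) * P).trace
      = P i i + 2 * P i j + 2 * P j i + 4 * P j j := by
  have hst : ∀ q : I5, star (ket i q + 2 * ket j q) = ket i q + 2 * ket j q := by
    intro q; simp [star_add, star_mul', star_ket]
  have h1 : (outer (fun p => ket i p + 2 * ket j p) * P).trace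
      = ∑ p, ∑ q, ((ket i p + 2 * ket j p) * (ket i q + 2 * ket j q)) * P q p := by
    simp [Matrix.trace, Matrix.diag, Matrix.mul_apply, outer, hst]
  rw [h1]
  have h2 : ∀ p : I5, (∑ q : I5, ((ket i p + 2 * ket j p) * (ket i q + 2 * ket j q)) * P q p)
      = ket i p * P i p + 2 * (ket j p * P i p) + 2 * (ket i p * P j p)
        + 4 * (ket j p * P j p) := by
    intro p
    have hq : ∀ q : I5, ((ket i p + 2 * ket j p) * (ket i q + 2 * ket j q)) * P q p
        = ket i p * (ket i q * P q p) + 2 * (ket j p * (ket i q * P q p))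
          + 2 * (ket i p * (ket j q * P q p)) + 4 * (ket j p * (ket j q * P q p)) := by
      intro q; ring
    simp only [hq, Finset.sum_add_distrib, ← Finset.mul_sum, sum_ket_mul]
  simp only [h2, Finset.sum_add_distrib, ← Finset.mul_sum, sum_ket_mul]

lemma trace_outerket_mul (i : I5) (P : Mat I5) :
    (outer (ket i) * P).trace = P i i := by
  have h1 : (outer (ket i) * P).trace = ∑ p, ∑ q, ket i p * (ket i q * P q p) := by
    simp [Matrix.trace, Matrix.diag, Matrix.mul_apply, outer, star_ket, mul_assoc]
  rw [h1]
  simp only [← Finset.mul_sum, sum_ket_mul]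

lemma inv_sqrt2 : ((Real.sqrt 2 : ℂ))⁻¹ * ((Real.sqrt 2 : ℂ))⁻¹ = 2⁻¹ := by
  rw [← mul_inv, sqrt2C]

lemma P0_11 : P0w i1 i1 = 1/2 := by
  simp [P0w, i1, phi, ket, f23, Fin.sum_univ_two, Prod.ext_iff, inv_sqrt2]
lemma P0_12 : P0w i1 i2 = 1/2 := by
  simp [P0w, i1, i2, phi, ket, f23, Fin.sum_univ_two, Prod.ext_iff, inv_sqrt2]
lemma P0_21 : P0w i2 i1 = 1/2 := by
  simp [P0w, i1, i2, phi, ket, f23, Fin.sum_univ_two, Prod.ext_iff, inv_sqrt2]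
lemma P0_22 : P0w i2 i2 = 1/2 := by
  simp [P0w, i2, phi, ket, f23, Fin.sum_univ_two, Prod.ext_iff, inv_sqrt2]
lemma P0_33 : P0w i3 i3 = 0 := by
  simp [P0w, i3, phi, ket, f23, Fin.sum_univ_two, Prod.ext_iff, inv_sqrt2]
lemma P1_11 : P1w i3 i3 = 1/2 := by
  simp [P1w, i3, phi, ket, f23, Fin.sum_univ_two, Prod.ext_iff, inv_sqrt2]
lemma P1_12 : P1w i3 j2 = 1/2 := by
  simp [P1w, i3, j2, phi, ket, f23, Fin.sum_univ_two, Prod.ext_iff, inv_sqrt2]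
lemma P1_21 : P1w j2 i3 = 1/2 := by
  simp [P1w, i3, j2, phi, ket, f23, Fin.sum_univ_two, Prod.ext_iff, inv_sqrt2]
lemma P1_22 : P1w j2 j2 = 1/2 := by
  simp [P1w, j2, phi, ket, f23, Fin.sum_univ_two, Prod.ext_iff, inv_sqrt2]
lemma P1_33 : P1w i1 i1 = 0 := by
  simp [P1w, i1, phi, ket, f23, Fin.sum_univ_two, Prod.ext_iff, inv_sqrt2]

lemma sig0_psd : sig0.PosSemidef := sig_psd (outer_psd v0) (outer_psd (ket i3))
lemma sig1_psd : sig1.PosSemidef := sig_psd (outer_psd v1) (outer_psd (ket i1))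

lemma hs_sig0 : hs sig0 P0w = 3/4 := by
  rw [hs, sig0_psd.1, sig0]
  rw [show v0 = fun p => ket i1 p + 2 * ket i2 p from rfl]
  rw [Matrix.smul_mul, Matrix.add_mul, Matrix.trace_smul, Matrix.trace_add,
    trace_outer2_mul, trace_outerket_mul, P0_11, P0_12, P0_21, P0_22, P0_33]
  norm_num

lemma hs_sig1 : hs sig1 P1w = 3/4 := by
  rw [hs, sig1_psd.1, sig1]
  rw [show v1 = fun p => ket i3 p + 2 * ket j2 p from rfl]
  rw [Matrix.smul_mul, Matrix.add_mul, Matrix.trace_smul, Matrix.trace_add,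
    trace_outer2_mul, trace_outerket_mul, P1_11, P1_12, P1_21, P1_22, P1_33]
  norm_num

def EE (i j : I5) : Mat I5 := fun p q => ket i p * ket j q
def Eb (b b' : Fin 3 × Fin 3) : Mat (Fin 3 × Fin 3) := fun p q => ket b p * ket b' q

lemma trYA_add (A B : Mat I5) : trYA (A + B) = trYA A + trYA B := by
  funext p q
  simp [trYA, Finset.sum_add_distrib]

lemma trYA_smul (c : ℂ) (A : Mat I5) : trYA (c • A) = c • trYA A := by
  funext p q
  simp [trYA, Finset.mul_sum, mul_add]

lemma sig0_decomp : sig0 = (1/6 : ℂ) •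
    (EE i1 i1 + (2:ℂ) • EE i1 i2 + (2:ℂ) • EE i2 i1 + (4:ℂ) • EE i2 i2 + EE i3 i3) := by
  funext p q
  simp only [sig0, outer, v0, EE, Matrix.smul_apply, Matrix.add_apply, smul_eq_mul,
    star_add, star_mul', star_ket]
  ring_nf
  rw [show star (2:ℂ) = 2 from by norm_num]
  ring

lemma sig1_decomp : sig1 = (1/6 : ℂ) •
    (EE i3 i3 + (2:ℂ) • EE i3 j2 + (2:ℂ) • EE j2 i3 + (4:ℂ) • EE j2 j2 + EE i1 i1) := by
  funext p q
  simp only [sig1, outer, v1, EE, Matrix.smul_apply, Matrix.add_apply, smul_eq_mul,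
    star_add, star_mul', star_ket]
  ring_nf
  rw [show star (2:ℂ) = 2 from by norm_num]
  ring

lemma trYA_i1i1 : trYA (EE i1 i1) = Eb (0,2) (0,2) := by
  funext p q
  simp [trYA, EE, Eb, ket, i1, Prod.ext_iff, Fin.sum_univ_two, Fin.sum_univ_three]

lemma trYA_i2i2 : trYA (EE i2 i2) = Eb (2,2) (2,2) := by
  funext p q
  simp [trYA, EE, Eb, ket, i2, Prod.ext_iff, Fin.sum_univ_two, Fin.sum_univ_three]

lemma trYA_i3i3 : trYA (EE i3 i3) = Eb (2,0) (2,0) := by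
  funext p q
  simp [trYA, EE, Eb, ket, i3, Prod.ext_iff, Fin.sum_univ_two, Fin.sum_univ_three]

lemma trYA_j2j2 : trYA (EE j2 j2) = Eb (2,2) (2,2) := by
  funext p q
  simp [trYA, EE, Eb, ket, j2, Prod.ext_iff, Fin.sum_univ_two, Fin.sum_univ_three]

lemma trYA_i1i2 : trYA (EE i1 i2) = 0 := by
  funext p q
  simp [trYA, EE, ket, i1, i2, Prod.ext_iff, Fin.sum_univ_two, Fin.sum_univ_three]

lemma trYA_i2i1 : trYA (EE i2 i1) = 0 := by
  funext p q
  simp [trYA, EE, ket, i1, i2, Prod.ext_iff, Fin.sum_univ_two, Fin.sum_univ_three]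

lemma trYA_i3j2 : trYA (EE i3 j2) = 0 := by
  funext p q
  simp [trYA, EE, ket, i3, j2, Prod.ext_iff, Fin.sum_univ_two, Fin.sum_univ_three]

lemma trYA_j2i3 : trYA (EE j2 i3) = 0 := by
  funext p q
  simp [trYA, EE, ket, i3, j2, Prod.ext_iff, Fin.sum_univ_two, Fin.sum_univ_three]

lemma trYA_eq : trYA sig0 = trYA sig1 := by
  rw [sig0_decomp, sig1_decomp]
  rw [trYA_smul, trYA_smul]
  rw [trYA_add, trYA_add, trYA_add, trYA_add, trYA_add, trYA_add, trYA_add, trYA_add,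
    trYA_smul, trYA_smul, trYA_smul, trYA_smul, trYA_smul, trYA_smul,
    trYA_i1i1, trYA_i2i2, trYA_i3i3, trYA_j2j2, trYA_i1i2, trYA_i2i1, trYA_i3j2, trYA_j2i3]
  simp only [smul_zero, add_zero, zero_add]
  congr 1
  abel

theorem weak_coin_flipping_cheating_Alice :
    IsGreatest
      {x : ℝ | ∃ σ0 σ1 : Mat I5,
        IsDensity σ0 ∧ IsDensity σ1 ∧ trYA σ0 = trYA σ1 ∧
        x = ((1/2 : ℂ) * hs σ0 P0w + (1/2 : ℂ) * hs σ1 P1w).re}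
      (3/4) := by
  constructor
  · refine ⟨sig0, sig1, ⟨sig0_psd, sig0_trace⟩, ⟨sig1_psd, sig1_trace⟩, trYA_eq, ?_⟩
    rw [hs_sig0, hs_sig1]
    norm_num
  · rintro x ⟨σ0, σ1, h0, h1, hm, rfl⟩
    exact upper_bound σ0 σ1 h0 h1 hm

end
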